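/- Let L be an integral ℓ-monoid, let α be a fuzzy regular expression over a finite alphabet X with associated alphabet Y, let A = (A, X∪Y, δ^A, a₀, τ^A) be an arbitrary nondeterministic finite automaton recognizing ‖α_R‖, and let E be a right invariant crisp equivalence on A. Then the restriction E^r of E to the set A^r_α is a crisp equivalence on A^r_α satisfying E^r∘δ_x^{A^r_α} ≤ δ_x^{A^r_α}∘E^r for every x ∈ X, and the map Φ : A^r_α/E^r → (A/E)^r_α defined by Φ(E^r_a) = E_a is a well-defined bijection that satisfies δ_x^{A^r_α/E^r}(E^r_a, E^r_b) = δ_x^{(A/E)^r_α}(Φ(E^r_a), Φ(E^r_b)) for all x ∈ X and a, b ∈ A^r_α; hence the fuzzy automata (A/E)^r_α and (A^r_α)/E^r are isomorphic. -/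

import Mathlib

attribute [local instance] Classical.propDecidable

/-- A lattice-ordered monoid (ℓ-monoid): a lattice with least element `⊥` and greatest
element `⊤`, together with a monoid structure (multiplication `*`, unit `1`, playing the
role of `e`) such that `⊥` (playing the role of the scalar `0`) is absorbing and
multiplication distributes over binary joins on both sides. -/
class LMonoid (L : Type*) extends Lattice L, BoundedOrder L, Monoid L where
  mul_bot : ∀ x : L, x * ⊥ = ⊥
  bot_mul : ∀ x : L, ⊥ * x = ⊥
  mul_sup : ∀ x y z : L, x * (y ⊔ z) = x * y ⊔ x * z
  sup_mul : ∀ x y z : L, (x ⊔ y) * z = x * z ⊔ y * z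

/-- An integral ℓ-monoid: the unit of the multiplication is the top element of the lattice. -/
class IntegralLMonoid (L : Type*) extends LMonoid L where
  one_eq_top : (1 : L) = ⊤

/-- Fuzzy regular expressions over an alphabet `X` with scalars in `L`. -/
inductive FRE (X L : Type*) where
  | zero : FRE X L
  | eps : FRE X L
  | char : X → FRE X L
  | smul : L → FRE X L → FRE X L
  | plus : FRE X L → FRE X L → FRE X L
  | comp : FRE X L → FRE X L → FRE X L
  | star : FRE X L → FRE X L

/-- The set of scalars of `L` occurring in a fuzzy regular expression. -/
def FRE.scalars {X L : Type*} : FRE X L → Set L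
  | .zero => ∅
  | .eps => ∅
  | .char _ => ∅
  | .smul lam β => insert lam β.scalars
  | .plus β γ => β.scalars ∪ γ.scalars
  | .comp β γ => β.scalars ∪ γ.scalars
  | .star β => β.scalars

noncomputable section

namespace Fz

variable {L : Type*} [IntegralLMonoid L]

/-- Composition of fuzzy relations: `(R ∘ S)(a,b) = ⋁_{c} R(a,c) ⊗ S(c,b)`. -/
def fcomp {A : Type*} [Fintype A] (R S : A → A → L) : A → A → L :=
  fun a b => Finset.univ.sup fun c => R a c * S c b

/-- Composition of a fuzzy relation with a fuzzy set: `(R ∘ f)(a) = ⋁_{b} R(a,b) ⊗ f(b)`. -/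
def fcompf {A : Type*} [Fintype A] (R : A → A → L) (f : A → L) : A → L :=
  fun a => Finset.univ.sup fun b => R a b * f b

/-- Composition of a fuzzy set with a fuzzy relation: `(f ∘ R)(a) = ⋁_{b} f(b) ⊗ R(b,a)`. -/
def fcompfR {A : Type*} [Fintype A] (f : A → L) (R : A → A → L) : A → L :=
  fun a => Finset.univ.sup fun b => f b * R b a

/-- Powers of a fuzzy relation: `R⁰` is the crisp equality and `R^{k+1} = R^k ∘ R`. -/
def rpow {A : Type*} [Fintype A] (R : A → A → L) : ℕ → A → A → L
  | 0 => fun a b => if a = b then 1 else ⊥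
  | k + 1 => fcomp (rpow R k) R

private def dstarAux {A Z : Type*} [Fintype A] (δ : A → Z → A → L) : A → List Z → A → L
  | a, [], b => if a = b then 1 else ⊥
  | a, z :: w, b => Finset.univ.sup fun c => dstarAux δ a w c * δ c z b

/-- The extension of a fuzzy transition relation to words:
`δ(a, ε, b) = 1` if `a = b` and `⊥` otherwise, and
`δ(a, ux, b) = ⋁_{c} δ(a, u, c) ⊗ δ(c, x, b)`. -/
def dstar {A Z : Type*} [Fintype A] (δ : A → Z → A → L) (a : A) (w : List Z) (b : A) : L :=
  dstarAux δ a w.reverse b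

/-- Fuzzy language recognized by a fuzzy automaton with a single crisp initial state `a0`:
`L(A)(u) = ⋁_{b} δ(a0, u, b) ⊗ τ(b)`. -/
def lang {A Z : Type*} [Fintype A] (δ : A → Z → A → L) (a0 : A) (τ : A → L)
    (w : List Z) : L :=
  Finset.univ.sup fun b => dstar δ a0 w b * τ b

/-- Concatenation of fuzzy languages: `(fg)(u) = ⋁_{u = vw} f(v) ⊗ g(w)`
(a finite join over the factorizations of `u`). -/
def fconcat {X : Type*} (f g : List X → L) : List X → L :=
  fun u => (Finset.range (u.length + 1)).sup fun i => f (u.take i) * g (u.drop i)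

/-- Powers of a fuzzy language: `f⁰` is the characteristic function of the empty word,
and `f^{n+1} = fⁿ f`. -/
def fpow {X : Type*} (f : List X → L) : ℕ → List X → L
  | 0 => fun u => if u = [] then 1 else ⊥
  | n + 1 => fconcat (fpow f n) f

/-- `IsNorm α f` asserts that `f` is the fuzzy language `‖α‖` represented by the fuzzy
regular expression `α` (for the star, `‖β*‖(u)` is the least upper bound of the powers,
which is required to exist). -/
inductive IsNorm {X : Type*} : FRE X L → (List X → L) → Prop
  | zero : IsNorm .zero fun _ => ⊥
  | eps : IsNorm .eps fun u => if u = [] then 1 else ⊥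
  | char (x : X) : IsNorm (.char x) fun u => if u = [x] then 1 else ⊥
  | smul (lam : L) {β : FRE X L} {f : List X → L} :
      IsNorm β f → IsNorm (.smul lam β) fun u => lam * f u
  | plus {β γ : FRE X L} {f g : List X → L} :
      IsNorm β f → IsNorm γ g → IsNorm (.plus β γ) fun u => f u ⊔ g u
  | comp {β γ : FRE X L} {f g : List X → L} :
      IsNorm β f → IsNorm γ g → IsNorm (.comp β γ) (fconcat f g)
  | star {β : FRE X L} {f g : List X → L} :
      IsNorm β f → (∀ u, IsLUB {l | ∃ n : ℕ, l = fpow f n u} (g u)) →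
      IsNorm (.star β) g

/-- The ordinary regular expression `α_R` over `X ∪ Y` obtained from a fuzzy regular
expression `α` by replacing each scalar `λ` by the associated letter `λ' = sc λ ∈ Y`. -/
def toReg {X Y : Type*} (sc : L → Y) : FRE X L → RegularExpression (X ⊕ Y)
  | .zero => 0
  | .eps => 1
  | .char x => RegularExpression.char (Sum.inl x)
  | .smul lam β => RegularExpression.char (Sum.inr (sc lam)) * toReg sc β
  | .plus β γ => toReg sc β + toReg sc γ
  | .comp β γ => toReg sc β * toReg sc γ
  | .star β => (toReg sc β).star

/-- `U_Y(u)`: the set of words over `X ∪ Y` from which deleting all letters of `Y`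
yields `u` (the shuffle of `u` with `Y*`). -/
def UY {X : Type*} (Y : Type*) (u : List X) : Set (List (X ⊕ Y)) :=
  {v | v.filterMap (fun z => z.getLeft?) = u}

/-- The homomorphism `φ*_α : (X ∪ Y)* → (L, ⊗, 1)` determined by mapping every letter of
`X` to `1` and every letter `λ' ∈ Y` to the corresponding scalar `λ = φY λ'`. -/
def phiStar {X Y : Type*} (φY : Y → L) (v : List (X ⊕ Y)) : L :=
  (v.map (Sum.elim (fun _ => (1 : L)) φY)).prod

/-- The language `‖α_R‖` of the regular expression `α_R`, viewed as a fuzzy language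
with membership values in `{0, 1} ⊆ L`. -/
def langR {X Y : Type*} (sc : L → Y) (α : FRE X L) (v : List (X ⊕ Y)) : L :=
  if v ∈ (toReg sc α).matches' then 1 else ⊥

/-- The reflexive fuzzy relation `R` on the state set of a nondeterministic automaton over
`X ∪ Y`: `R(a,a) = 1` and, for `a ≠ b`, `R(a,b) = ⋁_{λ' ∈ Y} λ ⊗ δ(a, λ', b)`. -/
def Rstep {X Y A : Type*} [Fintype A] [Fintype Y] (φY : Y → L)
    (δ : A → X ⊕ Y → A → L) : A → A → L :=
  fun a b => if a = b then 1 else Finset.univ.sup fun y : Y => φY y * δ a (Sum.inr y) b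

/-- The fuzzy relation `R_A = Rⁿ`, `n = |A|`: the least transitive fuzzy relation
containing `R`. -/
def RA {X Y A : Type*} [Fintype A] [Fintype Y] (φY : Y → L)
    (δ : A → X ⊕ Y → A → L) : A → A → L :=
  rpow (Rstep φY δ) (Fintype.card A)

/-- The set `{φ*_α(v) ⊗ δ^A(a,v,b) : v ∈ U_Y(x)}` whose least upper bound defines the
transition `δ^{A_α}(a, x, b)` of the fuzzy automaton associated with `A` and `α`. -/
def dset {X Y A : Type*} [Fintype A] (φY : Y → L) (δ : A → X ⊕ Y → A → L)
    (a : A) (x : X) (b : A) : Set L :=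
  {l | ∃ v ∈ UY Y [x], l = phiStar φY v * dstar δ a v b}

/-- The set `{⋁_{b} φ*_α(v) ⊗ δ^A(a,v,b) ⊗ τ(b) : v ∈ Y*}` whose least upper bound defines
the terminal degree `τ^{A_α}(a)` of the fuzzy automaton associated with `A` and `α`. -/
def tset {X Y A : Type*} [Fintype A] (φY : Y → L) (δ : A → X ⊕ Y → A → L)
    (τ : A → L) (a : A) : Set L :=
  {l | ∃ w : List Y, l = Finset.univ.sup fun b =>
    phiStar φY ((w.map Sum.inr : List (X ⊕ Y))) *
      dstar δ a (w.map Sum.inr) b * τ b}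


/-- The setoid on the state set induced by a crisp equivalence `E`
(`a ≈ b` iff `E(a,b) = 1`). -/
def toSetoid {A : Type*} (E : A → A → L) (hrefl : ∀ a, E a a = 1)
    (hsymm : ∀ a b, E a b = E b a) (htrans : ∀ a b c, E a b * E b c ≤ E a c) :
    Setoid A where
  r a b := E a b = 1
  iseqv := by
    refine ⟨fun a => hrefl a, fun {a b} h => by rw [hsymm]; exact h, fun {a b c} h1 h2 => ?_⟩
    refine le_antisymm ?_ ?_
    · rw [IntegralLMonoid.one_eq_top (L := L)]; exact le_top
    · calc (1 : L) = 1 * 1 := (one_mul 1).symm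
      _ = E a b * E b c := by rw [h1, h2]
      _ ≤ E a c := htrans a b c

theorem erow {A : Type*} {E : A → A → L} (hsymm : ∀ a b, E a b = E b a)
    (htrans : ∀ a b c, E a b * E b c ≤ E a c) {a a' : A} (h : E a a' = 1) (c : A) :
    E a c = E a' c := by
  apply le_antisymm
  · have h' : E a' a = 1 := by rw [hsymm]; exact h
    calc E a c = E a' a * E a c := by rw [h', one_mul]
    _ ≤ E a' c := htrans a' a c
  · calc E a' c = E a a' * E a' c := by rw [h, one_mul]
    _ ≤ E a c := htrans a a' c

theorem sandwich_congr {A : Type*} [Fintype A] {E : A → A → L}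
    (hsymm : ∀ a b, E a b = E b a) (htrans : ∀ a b c, E a b * E b c ≤ E a c)
    (M : A → A → L) {a a' b b' : A} (ha : E a a' = 1) (hb : E b b' = 1) :
    fcomp (fcomp E M) E a b = fcomp (fcomp E M) E a' b' := by
  simp only [fcomp]
  have h1 : ∀ c, (Finset.univ.sup fun d => E a d * M d c) =
      Finset.univ.sup fun d => E a' d * M d c :=
    fun c => Finset.sup_congr rfl fun d _ => by rw [erow hsymm htrans ha d]
  have h2 : ∀ c, E c b = E c b' := fun c => by
    rw [hsymm c b, erow hsymm htrans hb c, hsymm b' c]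
  exact Finset.sup_congr rfl fun c _ => by rw [h1 c, h2 c]

/-- The fuzzy transition relation of the factor automaton `A/E`:
`δ^{A/E}(E_a, z, E_b) = (E ∘ δ_z ∘ E)(a, b)`. -/
def deltaQ {A Z : Type*} [Fintype A] (E : A → A → L) (hrefl : ∀ a, E a a = 1)
    (hsymm : ∀ a b, E a b = E b a) (htrans : ∀ a b c, E a b * E b c ≤ E a c)
    (δ : A → Z → A → L) :
    Quotient (toSetoid E hrefl hsymm htrans) → Z →
      Quotient (toSetoid E hrefl hsymm htrans) → L :=
  fun p z q =>
    Quotient.lift₂ (fun a b => fcomp (fcomp E (fun c d => δ c z d)) E a b)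
      (fun _ _ _ _ ha hb => sandwich_congr hsymm htrans _ ha hb) p q

/-- The terminal fuzzy set of the factor automaton `A/E`: `τ^{A/E}(E_a) = (τ^A ∘ E)(a)`. -/
def tauQ {A : Type*} [Fintype A] (E : A → A → L) (hrefl : ∀ a, E a a = 1)
    (hsymm : ∀ a b, E a b = E b a) (htrans : ∀ a b c, E a b * E b c ≤ E a c)
    (τ : A → L) : Quotient (toSetoid E hrefl hsymm htrans) → L :=
  Quotient.lift (fun a => fcompfR τ E a)
    (fun a a' h => by
      simp only [fcompfR]
      exact Finset.sup_congr rfl fun b _ => by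
        rw [hsymm b a, erow hsymm htrans h b, hsymm a' b])

end Fz

end

namespace Fz

variable {L : Type*} [IntegralLMonoid L]

/-- The state set `B^r_α = {a₀} ∪ {a : δ(b,x,a) = 1 for some b, x ∈ X}` of the reduced
fuzzy automaton associated with a nondeterministic automaton over `X ∪ Y`. -/
def redStates {X Y A : Type*} (δ : A → X ⊕ Y → A → L) (a0 : A) : Set A :=
  {a | a = a0 ∨ ∃ (b : A) (x : X), δ b (Sum.inl x) a = 1}

/-- The fuzzy transition relation `δ^{B^r_α}_x = R_B ∘ δ^B_x` (restricted to the reduced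
state set) of the reduced fuzzy automaton. -/
noncomputable def redDelta {X Y A : Type*} [Fintype A] [Fintype Y] (φY : Y → L)
    (δ : A → X ⊕ Y → A → L) (a0 : A) :
    ↥(redStates δ a0) → X → ↥(redStates δ a0) → L :=
  fun p x q => fcomp (RA φY δ) (fun c d => δ c (Sum.inl x) d) p.1 q.1

/-- Restriction of a fuzzy relation to a subset of the underlying set. -/
def restrict {A : Type*} (S : Set A) (E : A → A → L) : ↥S → ↥S → L :=
  fun p q => E p.1 q.1

end Fz

namespace Fz

variable {L : Type*} [IntegralLMonoid L]

theorem le_one' (a : L) : a ≤ 1 := by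
  rw [IntegralLMonoid.one_eq_top (L := L)]; exact le_top

theorem mul_le_mul_left'' {a b : L} (h : a ≤ b) (c : L) : c * a ≤ c * b := by
  have : c * b = c * (a ⊔ b) := by rw [sup_eq_right.mpr h]
  rw [this, LMonoid.mul_sup]; exact le_sup_left

theorem mul_le_mul_right'' {a b : L} (h : a ≤ b) (c : L) : a * c ≤ b * c := by
  have : b * c = (a ⊔ b) * c := by rw [sup_eq_right.mpr h]
  rw [this, LMonoid.sup_mul]; exact le_sup_left

theorem mul_le_mul'' {a b c d : L} (h1 : a ≤ b) (h2 : c ≤ d) : a * c ≤ b * d :=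
  le_trans (mul_le_mul_left'' h2 a) (mul_le_mul_right'' h1 d)

theorem mul_le_left' (a b : L) : a * b ≤ b := by
  calc a * b ≤ 1 * b := mul_le_mul_right'' (le_one' a) b
  _ = b := one_mul b

theorem mul_le_right' (a b : L) : a * b ≤ a := by
  calc a * b ≤ a * 1 := mul_le_mul_left'' (le_one' b) a
  _ = a := mul_one a

theorem mul_finsetSup {I : Type*} (x : L) (s : Finset I) (f : I → L) :
    x * s.sup f = s.sup fun i => x * f i := by
  induction s using Finset.induction with
  | empty => simpa using LMonoid.mul_bot x
  | insert _ _ h ih => rw [Finset.sup_insert, Finset.sup_insert, LMonoid.mul_sup, ih]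

theorem finsetSup_mul {I : Type*} (x : L) (s : Finset I) (f : I → L) :
    s.sup f * x = s.sup fun i => f i * x := by
  induction s using Finset.induction with
  | empty => simpa using LMonoid.bot_mul x
  | insert _ _ h ih => rw [Finset.sup_insert, Finset.sup_insert, LMonoid.sup_mul, ih]

section FcompLemmas

variable {A : Type*} [Fintype A]

theorem fcomp_mono {R R' S S' : A → A → L} (hR : ∀ a b, R a b ≤ R' a b)
    (hS : ∀ a b, S a b ≤ S' a b) (a b : A) : fcomp R S a b ≤ fcomp R' S' a b := by
  simp only [fcomp]
  exact Finset.sup_le fun c _ => le_trans (mul_le_mul'' (hR a c) (hS c b))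
    (Finset.le_sup (f := fun c => R' a c * S' c b) (Finset.mem_univ c))

theorem fcomp_assoc (R S T : A → A → L) : fcomp (fcomp R S) T = fcomp R (fcomp S T) := by
  funext a b
  simp only [fcomp]
  calc (Finset.univ.sup fun c => (Finset.univ.sup fun d => R a d * S d c) * T c b)
      = Finset.univ.sup fun c => Finset.univ.sup fun d => R a d * S d c * T c b := by
        exact Finset.sup_congr rfl fun c _ => finsetSup_mul _ _ _
    _ = Finset.univ.sup fun d => Finset.univ.sup fun c => R a d * S d c * T c b :=
        Finset.sup_comm _ _ _
    _ = Finset.univ.sup fun d => R a d * Finset.univ.sup fun c => S d c * T c b := by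
        refine Finset.sup_congr rfl fun d _ => ?_
        rw [mul_finsetSup]
        exact Finset.sup_congr rfl fun c _ => (mul_assoc _ _ _)

/-- the crisp identity relation -/
theorem fcomp_id_left (S : A → A → L) :
    fcomp (fun a b => if a = b then (1 : L) else ⊥) S = S := by
  funext a b
  simp only [fcomp]
  refine le_antisymm (Finset.sup_le fun c _ => ?_) ?_
  · by_cases h : a = c
    · subst h; rw [if_pos rfl, one_mul]
    · rw [if_neg h, LMonoid.bot_mul]; exact bot_le
  · calc S a b = (if a = a then (1:L) else ⊥) * S a b := by rw [if_pos rfl, one_mul]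
      _ ≤ _ := Finset.le_sup (f := fun c => (if a = c then (1:L) else ⊥) * S c b)
        (Finset.mem_univ a)

theorem fcomp_id_right (S : A → A → L) :
    fcomp S (fun a b => if a = b then (1 : L) else ⊥) = S := by
  funext a b
  simp only [fcomp]
  refine le_antisymm (Finset.sup_le fun c _ => ?_) ?_
  · by_cases h : c = b
    · subst h; rw [if_pos rfl, mul_one]
    · rw [if_neg h, LMonoid.mul_bot]; exact bot_le
  · calc S a b = S a b * (if b = b then (1:L) else ⊥) := by rw [if_pos rfl, mul_one]
      _ ≤ _ := Finset.le_sup (f := fun c => S a c * if c = b then (1:L) else ⊥)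
        (Finset.mem_univ b)

end FcompLemmas

section Crisp

theorem all_eq_of_one_eq_bot (h : (1 : L) = ⊥) (a b : L) : a = b := by
  have ha : a = ⊥ := le_bot_iff.mp (h ▸ le_one' a)
  have hb : b = ⊥ := le_bot_iff.mp (h ▸ le_one' b)
  rw [ha, hb]

theorem crisp_mul {u v : L} (hu : u = 1 ∨ u = ⊥) (hv : v = 1 ∨ v = ⊥) :
    u * v = 1 ∨ u * v = ⊥ := by
  rcases hu with hu | hu <;> rcases hv with hv | hv <;> subst hu <;> subst hv
  · left; rw [one_mul]
  · right; rw [LMonoid.mul_bot]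
  · right; rw [LMonoid.bot_mul]
  · right; rw [LMonoid.bot_mul]

theorem crisp_mul_eq_one {u v : L} (hu : u = 1 ∨ u = ⊥) (hv : v = 1 ∨ v = ⊥)
    (h : u * v = 1) (h1 : (1 : L) ≠ ⊥) : u = 1 ∧ v = 1 := by
  rcases hu with hu | hu
  · rcases hv with hv | hv
    · exact ⟨hu, hv⟩
    · exact absurd (by rw [← h, hv, LMonoid.mul_bot]) h1
  · exact absurd (by rw [← h, hu, LMonoid.bot_mul]) h1

theorem crisp_sup {I : Type*} (s : Finset I) (f : I → L)
    (hf : ∀ i ∈ s, f i = 1 ∨ f i = ⊥) : s.sup f = 1 ∨ s.sup f = ⊥ := by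
  induction s using Finset.induction with
  | empty => right; simp
  | @insert i s hi ih =>
    rcases hf i (Finset.mem_insert_self i s) with h | h
    · left
      rw [Finset.sup_insert, h, IntegralLMonoid.one_eq_top]
      exact top_sup_eq _
    · rw [Finset.sup_insert, h, bot_sup_eq]
      exact ih fun j hj => hf j (Finset.mem_insert_of_mem hj)

theorem crisp_sup_eq_one {I : Type*} {s : Finset I} {f : I → L}
    (hf : ∀ i ∈ s, f i = 1 ∨ f i = ⊥) (h : s.sup f = 1) (h1 : (1 : L) ≠ ⊥) :
    ∃ i ∈ s, f i = 1 := by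
  by_contra hc
  push_neg at hc
  apply h1
  rw [← h]
  exact (Finset.sup_eq_bot_iff f s).mpr fun i hi => (hf i hi).resolve_left (hc i hi)

theorem eq_one_of_one_le {u : L} (h : 1 ≤ u) : u = 1 :=
  le_antisymm (le_one' u) h

end Crisp

section Paths

variable {B : Type*} [Fintype B]

noncomputable local instance (n : ℕ) : Fintype {l : List B // l.length = n} :=
  inferInstanceAs (Fintype (List.Vector B n))

set_option linter.unusedSectionVars false

/-- value of a walk from `a` through the states in `l` ending with a step into `b` -/
def W (R : B → B → L) : B → List B → B → L
  | a, [], b => R a b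
  | a, c :: l, b => R a c * W R c l b

theorem W_append (R : B → B → L) (a : B) (l1 : List B) (c : B) (l2 : List B) (b : B) :
    W R a (l1 ++ c :: l2) b = W R a l1 c * W R c l2 b := by
  induction l1 generalizing a with
  | nil => rfl
  | cons d l1 ih =>
    show R a d * W R d (l1 ++ c :: l2) b = R a d * W R d l1 c * W R c l2 b
    rw [ih d, mul_assoc]

theorem W_snoc (R : B → B → L) (a : B) (l : List B) (c b : B) :
    W R a (l ++ [c]) b = W R a l c * R c b :=
  W_append R a l c [] b

theorem W_replicate (R : B → B → L) (hR : ∀ c, R c c = 1) (k : ℕ) (b : B) :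
    W R b (List.replicate k b) b = 1 := by
  induction k with
  | zero => exact hR b
  | succ k ih =>
    rw [List.replicate_succ]
    show R b b * W R b (List.replicate k b) b = 1
    rw [hR, ih, one_mul]

/-- sup of walk values over all walks of a given length -/
noncomputable def supW (R : B → B → L) (n : ℕ) (a b : B) : L :=
  Finset.univ.sup fun v : List.Vector B n => W R a v.toList b

theorem W_le_supW (R : B → B → L) (hR : ∀ c, R c c = 1) {n : ℕ} {a b : B} {l : List B}
    (hl : l.length ≤ n) : W R a l b ≤ supW R n a b := by
  rcases eq_or_lt_of_le hl with h | h
  · exact Finset.le_sup (f := fun v : List.Vector B n => W R a v.toList b)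
      (Finset.mem_univ (⟨l, h⟩ : List.Vector B n))
  · have hlen : (l ++ b :: List.replicate (n - l.length - 1) b).length = n := by
      simp only [List.length_append, List.length_cons, List.length_replicate]
      omega
    have hW : W R a (l ++ b :: List.replicate (n - l.length - 1) b) b = W R a l b := by
      rw [W_append, W_replicate R hR, mul_one]
    calc W R a l b = _ := hW.symm
      _ ≤ supW R n a b := Finset.le_sup
          (f := fun v : List.Vector B n => W R a v.toList b)
          (Finset.mem_univ (⟨_, hlen⟩ : List.Vector B n))

theorem rpow_succ_eq_supW (R : B → B → L) (n : ℕ) (a : B) : ∀ b,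
    rpow R (n + 1) a b = supW R n a b := by
  induction n with
  | zero =>
    intro b
    have h0 : supW R 0 a b = R a b := by
      apply le_antisymm
      · refine Finset.sup_le fun v _ => ?_
        have hv : v.toList = [] := List.length_eq_zero_iff.mp v.toList_length
        rw [hv]
        exact le_rfl
      · exact Finset.le_sup (f := fun v : List.Vector B 0 => W R a v.toList b)
          (Finset.mem_univ List.Vector.nil)
    rw [h0]
    exact congrFun (congrFun (fcomp_id_left R) a) b
  | succ n ih =>
    intro b
    have key : ∀ c, supW R n a c * R c b =
        Finset.univ.sup fun v : List.Vector B n => W R a (v.toList ++ [c]) b := by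
      intro c
      rw [supW, finsetSup_mul]
      exact Finset.sup_congr rfl fun v _ => (W_snoc R a v.toList c b).symm
    calc rpow R (n + 2) a b
        = Finset.univ.sup (fun c => rpow R (n + 1) a c * R c b) := rfl
      _ = Finset.univ.sup (fun c =>
            Finset.univ.sup fun v : List.Vector B n => W R a (v.toList ++ [c]) b) :=
          Finset.sup_congr rfl fun c _ => by rw [ih c]; exact key c
      _ = supW R (n + 1) a b := by
          apply le_antisymm
          · refine Finset.sup_le fun c _ => Finset.sup_le fun v _ => ?_
            exact Finset.le_sup
              (f := fun v : List.Vector B (n+1) => W R a v.toList b)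
              (Finset.mem_univ (⟨v.toList ++ [c], by
                simp [v.toList_length]⟩ : List.Vector B (n+1)))
          · refine Finset.sup_le fun v _ => ?_
            have hne : v.toList ≠ [] := by
              intro h
              have := v.toList_length
              rw [h] at this
              simp at this
            set c := v.toList.getLast hne with hc
            have hdec : v.toList = v.toList.dropLast ++ [c] :=
              (List.dropLast_append_getLast hne).symm
            have hdl : v.toList.dropLast.length = n := by
              rw [List.length_dropLast, v.toList_length]
              omega
            calc W R a v.toList b = W R a (v.toList.dropLast ++ [c]) b := by rw [← hdec]
              _ = W R a v.toList.dropLast c * R c b := W_snoc R a v.toList.dropLast c b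
              _ ≤ Finset.univ.sup (fun w : List.Vector B n =>
                    W R a (w.toList ++ [c]) b) := by
                  have hmem := Finset.le_sup
                    (f := fun w : List.Vector B n => W R a (w.toList ++ [c]) b)
                    (Finset.mem_univ (⟨v.toList.dropLast, hdl⟩ : List.Vector B n))
                  refine le_trans (le_of_eq ?_) hmem
                  show W R a v.toList.dropLast c * R c b =
                    W R a (v.toList.dropLast ++ [c]) b
                  rw [W_snoc]
              _ ≤ _ := Finset.le_sup (f := fun c => Finset.univ.sup
                    fun w : List.Vector B n => W R a (w.toList ++ [c]) b)
                  (Finset.mem_univ c)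

theorem not_nodup_decomp {γ : Type*} {l : List γ} (h : ¬ l.Nodup) :
    ∃ (x : γ) (l1 l2 l3 : List γ), l = l1 ++ x :: l2 ++ x :: l3 := by
  induction l with
  | nil => exact absurd List.nodup_nil h
  | cons c t ih =>
    rw [List.nodup_cons] at h
    push_neg at h
    by_cases hc : c ∈ t
    · obtain ⟨s, t2, hst⟩ := List.append_of_mem hc
      exact ⟨c, [], s, t2, by rw [hst]; rfl⟩
    · obtain ⟨x, l1, l2, l3, hl⟩ := ih (h hc)
      exact ⟨x, c :: l1, l2, l3, by rw [hl]; rfl⟩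

theorem rpow_succ_le (R : B → B → L) (hR : ∀ c, R c c = 1) {m : ℕ}
    (hcard : Fintype.card B ≤ m + 1) (a b : B) :
    rpow R (m + 2) a b ≤ rpow R (m + 1) a b := by
  rw [rpow_succ_eq_supW, rpow_succ_eq_supW]
  refine Finset.sup_le fun v _ => ?_
  have hnd : ¬ (a :: v.toList).Nodup := by
    intro hnd
    have h1 := hnd.length_le_card
    rw [List.length_cons, v.toList_length] at h1
    omega
  obtain ⟨x, l1, l2, l3, hl⟩ := not_nodup_decomp hnd
  cases l1 with
  | nil =>
    rw [List.nil_append] at hl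
    obtain ⟨ha, hv⟩ := List.cons.inj hl
    subst ha
    simp only [List.append_eq, List.cons_append] at hv
    have hlen : l3.length ≤ m := by
      have := v.toList_length
      rw [hv] at this
      simp only [List.length_append, List.length_cons] at this
      omega
    calc W R a v.toList b = W R a l2 a * W R a l3 b := by rw [hv, W_append]
      _ ≤ W R a l3 b := mul_le_left' _ _
      _ ≤ supW R m a b := W_le_supW R hR hlen
  | cons d l1' =>
    rw [List.cons_append] at hl
    obtain ⟨ha, hv⟩ := List.cons.inj hl
    subst ha
    simp only [List.append_eq, List.cons_append] at hv
    have hlen : (l1' ++ x :: l3).length ≤ m := by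
      have := v.toList_length
      rw [hv] at this
      simp only [List.length_append, List.length_cons] at this ⊢
      omega
    calc W R a v.toList b = W R a l1' x * (W R x l2 x * W R x l3 b) := by
          rw [hv, W_append, W_append, mul_assoc]
      _ ≤ W R a l1' x * W R x l3 b := mul_le_mul_left'' (mul_le_left' _ _) _
      _ = W R a (l1' ++ x :: l3) b := (W_append R a l1' x l3 b).symm
      _ ≤ supW R m a b := W_le_supW R hR hlen

theorem rpow_le_succ' (R : B → B → L) (hR : ∀ c, R c c = 1) (n : ℕ) (a b : B) :
    rpow R n a b ≤ rpow R (n + 1) a b := by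
  calc rpow R n a b = rpow R n a b * R b b := by rw [hR, mul_one]
    _ ≤ Finset.univ.sup fun c => rpow R n a c * R c b :=
        Finset.le_sup (f := fun c => rpow R n a c * R c b) (Finset.mem_univ b)
    _ = rpow R (n + 1) a b := rfl

theorem rpow_eq_of_card_le (R : B → B → L) (hR : ∀ c, R c c = 1) {m n : ℕ}
    (hcard : Fintype.card B ≤ m) (hm : 1 ≤ m) (hmn : m ≤ n) :
    rpow R n = rpow R m := by
  induction n, hmn using Nat.le_induction with
  | base => rfl
  | succ n hmn ih =>
    rw [← ih]
    funext a b
    refine le_antisymm ?_ (rpow_le_succ' R hR n a b)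
    obtain ⟨k, rfl⟩ : ∃ k, n = k + 1 := ⟨n - 1, by omega⟩
    exact rpow_succ_le R hR (by omega) a b

end Paths

section EquivAlg

set_option linter.unusedSectionVars false

variable {A : Type*} [Fintype A] {E : A → A → L}

theorem fcomp_EE (hrefl : ∀ a, E a a = 1) (htrans : ∀ a b c, E a b * E b c ≤ E a c) :
    fcomp E E = E := by
  funext a b
  refine le_antisymm (Finset.sup_le fun c _ => htrans a c b) ?_
  calc E a b = E a a * E a b := by rw [hrefl, one_mul]
    _ ≤ _ := Finset.le_sup (f := fun c => E a c * E c b) (Finset.mem_univ a)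

theorem le_fcomp_left (hrefl : ∀ a, E a a = 1) (M : A → A → L) (a b : A) :
    M a b ≤ fcomp E M a b :=
  calc M a b = E a a * M a b := by rw [hrefl, one_mul]
    _ ≤ _ := Finset.le_sup (f := fun c => E a c * M c b) (Finset.mem_univ a)

theorem le_fcomp_right (hrefl : ∀ a, E a a = 1) (M : A → A → L) (a b : A) :
    M a b ≤ fcomp M E a b :=
  calc M a b = M a b * E b b := by rw [hrefl, mul_one]
    _ ≤ _ := Finset.le_sup (f := fun c => M a c * E c b) (Finset.mem_univ b)

/-- sandwich: if `E∘M ≤ M∘E` then `E∘M∘E = M∘E`. -/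
theorem sandwich_eq (hrefl : ∀ a, E a a = 1) (htrans : ∀ a b c, E a b * E b c ≤ E a c)
    {M : A → A → L} (h : ∀ a b, fcomp E M a b ≤ fcomp M E a b) (a b : A) :
    fcomp (fcomp E M) E a b = fcomp M E a b := by
  apply le_antisymm
  · calc fcomp (fcomp E M) E a b ≤ fcomp (fcomp M E) E a b :=
        fcomp_mono h (fun _ _ => le_rfl) a b
      _ = fcomp M (fcomp E E) a b := by rw [fcomp_assoc]
      _ = fcomp M E a b := by rw [fcomp_EE hrefl htrans]
  · calc fcomp M E a b ≤ fcomp E (fcomp M E) a b := le_fcomp_left hrefl _ a b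
      _ = fcomp (fcomp E M) E a b := by rw [← fcomp_assoc]

theorem fcomp_rpow_le {R S : A → A → L}
    (h : ∀ a b, fcomp S R a b ≤ fcomp R S a b) (k : ℕ) (a b : A) :
    fcomp S (rpow R k) a b ≤ fcomp (rpow R k) S a b := by
  induction k generalizing a b with
  | zero =>
    have h1 : fcomp S (rpow R 0) = S := fcomp_id_right S
    have h2 : fcomp (rpow R 0) S = S := fcomp_id_left S
    rw [h1, h2]
  | succ k ih =>
    calc fcomp S (rpow R (k + 1)) a b = fcomp (fcomp S (rpow R k)) R a b := by
          rw [show rpow R (k+1) = fcomp (rpow R k) R from rfl, ← fcomp_assoc]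
      _ ≤ fcomp (fcomp (rpow R k) S) R a b := fcomp_mono ih (fun _ _ => le_rfl) a b
      _ = fcomp (rpow R k) (fcomp S R) a b := by rw [fcomp_assoc]
      _ ≤ fcomp (rpow R k) (fcomp R S) a b := fcomp_mono (fun _ _ => le_rfl) h a b
      _ = fcomp (rpow R (k + 1)) S a b := by
          rw [show rpow R (k+1) = fcomp (rpow R k) R from rfl, fcomp_assoc]

theorem E_Rstep_le {X Y : Type*} [Fintype Y] (φY : Y → L) (δ : A → X ⊕ Y → A → L)
    (hδ : ∀ a z b, δ a z b = 1 ∨ δ a z b = ⊥)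
    (hcrisp : ∀ a b, E a b = 1 ∨ E a b = ⊥) (hrefl : ∀ a, E a a = 1)
    (hrinv : ∀ (z : X ⊕ Y) (a b : A),
      fcomp E (fun p q => δ p z q) a b ≤ fcomp (fun p q => δ p z q) E a b)
    (a b : A) :
    fcomp E (Rstep (X := X) φY δ) a b ≤ fcomp (Rstep (X := X) φY δ) E a b := by
  by_cases htriv : (1 : L) = ⊥
  · exact le_of_eq (all_eq_of_one_eq_bot htriv _ _)
  refine Finset.sup_le fun c _ => ?_
  rcases hcrisp a c with hE | hE
  swap
  · rw [hE, LMonoid.bot_mul]; exact bot_le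
  rw [hE, one_mul]
  by_cases hcb : c = b
  · subst hcb
    rw [Rstep, if_pos rfl]
    calc (1 : L) = Rstep (X := X) φY δ a a * E a c := by
          rw [hE, mul_one, Rstep, if_pos rfl]
      _ ≤ _ := Finset.le_sup (f := fun d => Rstep (X := X) φY δ a d * E d c)
          (Finset.mem_univ a)
  · rw [Rstep, if_neg hcb]
    refine Finset.sup_le fun y _ => ?_
    rcases hδ c (Sum.inr y) b with hd | hd
    swap
    · rw [hd, LMonoid.mul_bot]; exact bot_le
    rw [hd, mul_one]
    -- find d with δ a (inr y) d = 1 and E d b = 1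
    have hone : fcomp (fun p q => δ p (Sum.inr y) q) E a b = 1 := by
      apply eq_one_of_one_le
      calc (1 : L) = E a c * δ c (Sum.inr y) b := by rw [hE, hd, one_mul]
        _ ≤ fcomp E (fun p q => δ p (Sum.inr y) q) a b :=
            Finset.le_sup (f := fun e => E a e * δ e (Sum.inr y) b) (Finset.mem_univ c)
        _ ≤ _ := hrinv (Sum.inr y) a b
    obtain ⟨e, _, he⟩ := crisp_sup_eq_one
      (f := fun e => δ a (Sum.inr y) e * E e b)
      (fun e _ => crisp_mul (hδ a (Sum.inr y) e) (hcrisp e b)) hone htriv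
    obtain ⟨he1, he2⟩ := crisp_mul_eq_one (hδ a (Sum.inr y) e) (hcrisp e b) he htriv
    calc φY y ≤ Rstep (X := X) φY δ a e * E e b := by
          rw [he2, mul_one]
          by_cases hae : a = e
          · rw [Rstep, if_pos hae]; exact le_one' _
          · rw [Rstep, if_neg hae]
            calc φY y = φY y * δ a (Sum.inr y) e := by rw [he1, mul_one]
              _ ≤ _ := Finset.le_sup (f := fun y' : Y => φY y' * δ a (Sum.inr y') e)
                  (Finset.mem_univ y)
      _ ≤ _ := Finset.le_sup (f := fun d => Rstep (X := X) φY δ a d * E d b)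
          (Finset.mem_univ e)

theorem sup_quotient {s : Setoid A} (g : Quotient s → L) :
    (Finset.univ.sup g) = Finset.univ.sup fun a : A => g (Quotient.mk s a) := by
  classical
  have himg : (Finset.univ : Finset A).image (Quotient.mk s) = Finset.univ :=
    Finset.image_univ_of_surjective (fun q => Quot.exists_rep q)
  rw [← himg, Finset.sup_image]
  rfl

theorem sandwich_step (hrefl : ∀ a, E a a = 1) (htrans : ∀ a b c, E a b * E b c ≤ E a c)
    {M R : A → A → L} (hER : ∀ a b, fcomp E R a b ≤ fcomp R E a b) (a b : A) :
    fcomp (fcomp (fcomp E M) E) (fcomp R E) a b = fcomp (fcomp E (fcomp M R)) E a b := by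
  have key : fcomp (fcomp E M) (fcomp R E) = fcomp (fcomp E (fcomp M R)) E := by
    rw [fcomp_assoc E M (fcomp R E), ← fcomp_assoc M R E, ← fcomp_assoc E (fcomp M R) E]
  apply le_antisymm
  · calc fcomp (fcomp (fcomp E M) E) (fcomp R E) a b
        = fcomp (fcomp E M) (fcomp (fcomp E R) E) a b := by
          rw [fcomp_assoc (fcomp E M) E (fcomp R E), ← fcomp_assoc E R E]
      _ ≤ fcomp (fcomp E M) (fcomp (fcomp R E) E) a b :=
          fcomp_mono (fun _ _ => le_rfl)
            (fun c d => fcomp_mono hER (fun _ _ => le_rfl) c d) a b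
      _ = fcomp (fcomp E M) (fcomp R E) a b := by
          rw [fcomp_assoc R E E, fcomp_EE hrefl htrans]
      _ = fcomp (fcomp E (fcomp M R)) E a b := by rw [key]
  · calc fcomp (fcomp E (fcomp M R)) E a b = fcomp (fcomp E M) (fcomp R E) a b := by
          rw [key]
      _ ≤ fcomp (fcomp E M) (fcomp E (fcomp R E)) a b :=
          fcomp_mono (fun _ _ => le_rfl)
            (fun c d => le_fcomp_left hrefl (fcomp R E) c d) a b
      _ = fcomp (fcomp (fcomp E M) E) (fcomp R E) a b := by
          rw [← fcomp_assoc (fcomp E M) E (fcomp R E)]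

end EquivAlg

section SubtypeSup

set_option linter.unusedSectionVars false

variable {A : Type*} [Fintype A]

theorem sup_subtype_le {S : Set A} [Fintype ↥S] (g : A → L) :
    (Finset.univ.sup fun p : ↥S => g p.1) ≤ Finset.univ.sup g :=
  Finset.sup_le fun p _ => Finset.le_sup (f := g) (Finset.mem_univ p.1)

theorem sup_subtype_eq {S : Set A} [Fintype ↥S] (g : A → L) (h : ∀ a ∉ S, g a = ⊥) :
    (Finset.univ.sup fun p : ↥S => g p.1) = Finset.univ.sup g := by
  refine le_antisymm (sup_subtype_le g) (Finset.sup_le fun a _ => ?_)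
  by_cases ha : a ∈ S
  · exact Finset.le_sup (f := fun p : ↥S => g p.1) (Finset.mem_univ (⟨a, ha⟩ : ↥S))
  · rw [h a ha]; exact bot_le

theorem RAdelta_bot {X Y : Type*} [Fintype Y] (φY : Y → L) (δ : A → X ⊕ Y → A → L)
    (a0 : A) (hδ : ∀ a z b, δ a z b = 1 ∨ δ a z b = ⊥) (x : X) (p : A) {c : A}
    (hc : c ∉ redStates δ a0) :
    fcomp (RA φY δ) (fun r s => δ r (Sum.inl x) s) p c = ⊥ := by
  refine le_bot_iff.mp (Finset.sup_le fun d _ => ?_)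
  have hbot : δ d (Sum.inl x) c = ⊥ := by
    rcases hδ d (Sum.inl x) c with h | h
    · exact absurd (Or.inr ⟨d, x, h⟩) hc
    · exact h
  show RA φY δ p d * δ d (Sum.inl x) c ≤ ⊥
  rw [hbot, LMonoid.mul_bot]

end SubtypeSup

section QuotientAlg

set_option linter.unusedSectionVars false

variable {A : Type*} [Fintype A] {E : A → A → L}

theorem deltaQ_eq (hrefl : ∀ a, E a a = 1) (hsymm : ∀ a b, E a b = E b a)
    (htrans : ∀ a b c, E a b * E b c ≤ E a c) {Z : Type*} (δ : A → Z → A → L)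
    (hrinv : ∀ (z : Z) (a b : A),
      fcomp E (fun p q => δ p z q) a b ≤ fcomp (fun p q => δ p z q) E a b)
    (z : Z) (a b : A) :
    deltaQ E hrefl hsymm htrans δ (Quotient.mk (toSetoid E hrefl hsymm htrans) a) z
      (Quotient.mk (toSetoid E hrefl hsymm htrans) b) =
      fcomp (fun p q => δ p z q) E a b :=
  sandwich_eq hrefl htrans (hrinv z) a b

theorem RstepQ_eq (hcrisp : ∀ a b, E a b = 1 ∨ E a b = ⊥) (hrefl : ∀ a, E a a = 1)
    (hsymm : ∀ a b, E a b = E b a) (htrans : ∀ a b c, E a b * E b c ≤ E a c)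
    {X Y : Type*} [Fintype Y] (φY : Y → L) (δ : A → X ⊕ Y → A → L)
    (hrinv : ∀ (z : X ⊕ Y) (a b : A),
      fcomp E (fun p q => δ p z q) a b ≤ fcomp (fun p q => δ p z q) E a b)
    (a b : A) :
    Rstep φY (deltaQ E hrefl hsymm htrans δ)
        (Quotient.mk (toSetoid E hrefl hsymm htrans) a)
        (Quotient.mk (toSetoid E hrefl hsymm htrans) b) =
      fcomp (Rstep (X := X) φY δ) E a b := by
  by_cases hab : (Quotient.mk (toSetoid E hrefl hsymm htrans) a =
      Quotient.mk (toSetoid E hrefl hsymm htrans) b)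
  · rw [Rstep, if_pos hab]
    have hEab : E a b = 1 := Quotient.exact hab
    symm
    apply eq_one_of_one_le
    calc (1 : L) = Rstep (X := X) φY δ a a * E a b := by
          rw [hEab, mul_one, Rstep, if_pos rfl]
      _ ≤ _ := Finset.le_sup (f := fun c => Rstep (X := X) φY δ a c * E c b)
          (Finset.mem_univ a)
  · rw [Rstep, if_neg hab]
    have hEab : E a b = ⊥ := by
      rcases hcrisp a b with h | h
      · exact absurd (Quotient.sound h) hab
      · exact h
    calc (Finset.univ.sup fun y : Y => φY y * deltaQ E hrefl hsymm htrans δ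
            (Quotient.mk (toSetoid E hrefl hsymm htrans) a) (Sum.inr y)
            (Quotient.mk (toSetoid E hrefl hsymm htrans) b))
        = Finset.univ.sup fun y : Y => Finset.univ.sup fun d : A =>
            φY y * δ a (Sum.inr y) d * E d b := by
          refine Finset.sup_congr rfl fun y _ => ?_
          rw [deltaQ_eq hrefl hsymm htrans δ hrinv (Sum.inr y) a b]
          show φY y * (Finset.univ.sup fun d => δ a (Sum.inr y) d * E d b) = _
          rw [mul_finsetSup]
          exact Finset.sup_congr rfl fun d _ => (mul_assoc _ _ _).symm
      _ = Finset.univ.sup fun d : A => Finset.univ.sup fun y : Y =>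
            φY y * δ a (Sum.inr y) d * E d b := Finset.sup_comm _ _ _
      _ = Finset.univ.sup fun d : A =>
            (Finset.univ.sup fun y : Y => φY y * δ a (Sum.inr y) d) * E d b :=
          Finset.sup_congr rfl fun d _ => (finsetSup_mul _ _ _).symm
      _ = Finset.univ.sup fun d => Rstep (X := X) φY δ a d * E d b := by
          refine Finset.sup_congr rfl fun d _ => ?_
          by_cases had : a = d
          · subst had
            rw [hEab, LMonoid.mul_bot, LMonoid.mul_bot]
          · rw [Rstep, if_neg had]
      _ = fcomp (Rstep (X := X) φY δ) E a b := rfl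

theorem rpowQ_eq (hcrisp : ∀ a b, E a b = 1 ∨ E a b = ⊥) (hrefl : ∀ a, E a a = 1)
    (hsymm : ∀ a b, E a b = E b a) (htrans : ∀ a b c, E a b * E b c ≤ E a c)
    {X Y : Type*} [Fintype Y] (φY : Y → L) (δ : A → X ⊕ Y → A → L)
    (hδ : ∀ a z b, δ a z b = 1 ∨ δ a z b = ⊥)
    (hrinv : ∀ (z : X ⊕ Y) (a b : A),
      fcomp E (fun p q => δ p z q) a b ≤ fcomp (fun p q => δ p z q) E a b)
    (k : ℕ) (a : A) : ∀ b : A,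
    rpow (Rstep φY (deltaQ E hrefl hsymm htrans δ)) k
        (Quotient.mk (toSetoid E hrefl hsymm htrans) a)
        (Quotient.mk (toSetoid E hrefl hsymm htrans) b) =
      fcomp (fcomp E (rpow (Rstep (X := X) φY δ) k)) E a b := by
  induction k with
  | zero =>
    intro b
    have hR : fcomp (fcomp E (rpow (Rstep (X := X) φY δ) 0)) E a b = E a b := by
      have h1 : fcomp E (rpow (Rstep (X := X) φY δ) 0) = E := fcomp_id_right E
      rw [h1, fcomp_EE hrefl htrans]
    rw [hR]
    simp only [rpow]
    split_ifs with hab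
    · exact (Quotient.exact hab : E a b = 1).symm
    · rcases hcrisp a b with h | h
      · exact absurd (Quotient.sound h) hab
      · exact h.symm
  | succ k ih =>
    intro b
    calc rpow (Rstep φY (deltaQ E hrefl hsymm htrans δ)) (k + 1)
          (Quotient.mk (toSetoid E hrefl hsymm htrans) a)
          (Quotient.mk (toSetoid E hrefl hsymm htrans) b)
        = Finset.univ.sup (fun C : Quotient (toSetoid E hrefl hsymm htrans) =>
            rpow (Rstep φY (deltaQ E hrefl hsymm htrans δ)) k
              (Quotient.mk (toSetoid E hrefl hsymm htrans) a) C *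
            Rstep φY (deltaQ E hrefl hsymm htrans δ) C
              (Quotient.mk (toSetoid E hrefl hsymm htrans) b)) := rfl
      _ = Finset.univ.sup (fun c : A =>
            rpow (Rstep φY (deltaQ E hrefl hsymm htrans δ)) k
              (Quotient.mk (toSetoid E hrefl hsymm htrans) a)
              (Quotient.mk (toSetoid E hrefl hsymm htrans) c) *
            Rstep φY (deltaQ E hrefl hsymm htrans δ)
              (Quotient.mk (toSetoid E hrefl hsymm htrans) c)
              (Quotient.mk (toSetoid E hrefl hsymm htrans) b)) := sup_quotient _
      _ = Finset.univ.sup (fun c : A =>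
            fcomp (fcomp E (rpow (Rstep (X := X) φY δ) k)) E a c *
            fcomp (Rstep (X := X) φY δ) E c b) := by
          refine Finset.sup_congr rfl fun c _ => ?_
          rw [ih c, RstepQ_eq hcrisp hrefl hsymm htrans φY δ hrinv c b]
      _ = fcomp (fcomp (fcomp E (rpow (Rstep (X := X) φY δ) k)) E)
            (fcomp (Rstep (X := X) φY δ) E) a b := rfl
      _ = fcomp (fcomp E (fcomp (rpow (Rstep (X := X) φY δ) k) (Rstep (X := X) φY δ)))
            E a b :=
          sandwich_step hrefl htrans (E_Rstep_le φY δ hδ hcrisp hrefl hrinv) a b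
      _ = fcomp (fcomp E (rpow (Rstep (X := X) φY δ) (k + 1))) E a b := rfl

theorem RAQ_eq (hcrisp : ∀ a b, E a b = 1 ∨ E a b = ⊥) (hrefl : ∀ a, E a a = 1)
    (hsymm : ∀ a b, E a b = E b a) (htrans : ∀ a b c, E a b * E b c ≤ E a c)
    {X Y : Type*} [Fintype Y] (φY : Y → L) (δ : A → X ⊕ Y → A → L)
    (hδ : ∀ a z b, δ a z b = 1 ∨ δ a z b = ⊥)
    (hrinv : ∀ (z : X ⊕ Y) (a b : A),
      fcomp E (fun p q => δ p z q) a b ≤ fcomp (fun p q => δ p z q) E a b)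
    (a b : A) :
    RA φY (deltaQ E hrefl hsymm htrans δ)
        (Quotient.mk (toSetoid E hrefl hsymm htrans) a)
        (Quotient.mk (toSetoid E hrefl hsymm htrans) b) =
      fcomp (RA (X := X) φY δ) E a b := by
  have hne : Nonempty (Quotient (toSetoid E hrefl hsymm htrans)) :=
    ⟨Quotient.mk (toSetoid E hrefl hsymm htrans) a⟩
  have hstab : rpow (Rstep φY (deltaQ E hrefl hsymm htrans δ)) (Fintype.card A) =
      rpow (Rstep φY (deltaQ E hrefl hsymm htrans δ))
        (Fintype.card (Quotient (toSetoid E hrefl hsymm htrans))) :=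
    rpow_eq_of_card_le _ (fun C => by rw [Rstep, if_pos rfl])
      le_rfl (@Fintype.card_pos _ _ hne) (Fintype.card_quotient_le _)
  calc RA φY (deltaQ E hrefl hsymm htrans δ)
        (Quotient.mk (toSetoid E hrefl hsymm htrans) a)
        (Quotient.mk (toSetoid E hrefl hsymm htrans) b)
      = rpow (Rstep φY (deltaQ E hrefl hsymm htrans δ)) (Fintype.card A)
        (Quotient.mk (toSetoid E hrefl hsymm htrans) a)
        (Quotient.mk (toSetoid E hrefl hsymm htrans) b) := by rw [RA, hstab]
    _ = fcomp (fcomp E (rpow (Rstep (X := X) φY δ) (Fintype.card A))) E a b :=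
        rpowQ_eq hcrisp hrefl hsymm htrans φY δ hδ hrinv (Fintype.card A) a b
    _ = fcomp (rpow (Rstep (X := X) φY δ) (Fintype.card A)) E a b :=
        sandwich_eq hrefl htrans
          (fun a b => fcomp_rpow_le (E_Rstep_le φY δ hδ hcrisp hrefl hrinv)
            (Fintype.card A) a b) a b
    _ = fcomp (RA (X := X) φY δ) E a b := rfl

theorem sandwich_step2 (hrefl : ∀ a, E a a = 1) (htrans : ∀ a b c, E a b * E b c ≤ E a c)
    {M R : A → A → L} (hER : ∀ a b, fcomp E R a b ≤ fcomp R E a b) (a b : A) :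
    fcomp (fcomp M E) (fcomp R E) a b = fcomp (fcomp M R) E a b := by
  apply le_antisymm
  · calc fcomp (fcomp M E) (fcomp R E) a b
        = fcomp M (fcomp (fcomp E R) E) a b := by
          rw [fcomp_assoc M E (fcomp R E), ← fcomp_assoc E R E]
      _ ≤ fcomp M (fcomp (fcomp R E) E) a b :=
          fcomp_mono (fun _ _ => le_rfl)
            (fun c d => fcomp_mono hER (fun _ _ => le_rfl) c d) a b
      _ = fcomp M (fcomp R E) a b := by rw [fcomp_assoc R E E, fcomp_EE hrefl htrans]
      _ = fcomp (fcomp M R) E a b := by rw [← fcomp_assoc M R E]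
  · calc fcomp (fcomp M R) E a b = fcomp M (fcomp R E) a b := by rw [fcomp_assoc M R E]
      _ ≤ fcomp M (fcomp (fcomp E R) E) a b :=
          fcomp_mono (fun _ _ => le_rfl)
            (fun c d => by
              rw [fcomp_assoc E R E]
              exact le_fcomp_left hrefl (fcomp R E) c d) a b
      _ = fcomp (fcomp M E) (fcomp R E) a b := by
          rw [fcomp_assoc M E (fcomp R E), ← fcomp_assoc E R E]

end QuotientAlg

end Fz

open Fz in
/-- **Theorem 10 of the paper.** Let `L` be an integral ℓ-monoid, `α` a
fuzzy regular expression over a finite alphabet `X` with associated alphabet `Y`,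
`A = (A, X∪Y, δ, a₀, τ)` an arbitrary nondeterministic finite automaton recognizing
`‖α_R‖`, and `E` a right invariant crisp equivalence on `A`.  Then the restriction `E^r`
of `E` to `A^r_α` is a crisp equivalence on `A^r_α` satisfying
`E^r ∘ δ_x^{A^r_α} ≤ δ_x^{A^r_α} ∘ E^r` for every `x ∈ X`, and the map
`Φ : A^r_α/E^r → (A/E)^r_α`, `Φ(E^r_a) = E_a`, is a well-defined bijection with
`δ_x^{A^r_α/E^r}(E^r_a, E^r_b) = δ_x^{(A/E)^r_α}(Φ(E^r_a), Φ(E^r_b))` for all `x ∈ X` and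
`a, b ∈ A^r_α`; hence the fuzzy automata `(A/E)^r_α` and `(A^r_α)/E^r` are isomorphic. -/
theorem stmt18 {L X Y A : Type*} [IntegralLMonoid L] [Fintype X] [Fintype Y] [Fintype A]
    (α : FRE X L) (sc : L → Y) (φY : Y → L)
    (hsc : Set.BijOn sc α.scalars (Set.univ : Set Y))
    (hφY : ∀ l ∈ α.scalars, φY (sc l) = l)
    (δ : A → X ⊕ Y → A → L) (a0 : A) (τ : A → L)
    (hδ : ∀ a z b, δ a z b = 1 ∨ δ a z b = ⊥)
    (hτ : ∀ a, τ a = 1 ∨ τ a = ⊥)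
    (hrec : ∀ v : List (X ⊕ Y), lang δ a0 τ v = langR sc α v)
    (E : A → A → L)
    (hcrisp : ∀ a b, E a b = 1 ∨ E a b = ⊥)
    (hrefl : ∀ a, E a a = 1) (hsymm : ∀ a b, E a b = E b a)
    (htrans : ∀ a b c, E a b * E b c ≤ E a c)
    (hrinv : ∀ (z : X ⊕ Y) (a b : A),
      fcomp E (fun p q => δ p z q) a b ≤ fcomp (fun p q => δ p z q) E a b)
    (hτinv : ∀ a, fcompf E τ a = τ a) :
    -- `E^r` is a crisp equivalence on `A^r_α`
    (∀ p q : ↥(redStates δ a0), restrict (redStates δ a0) E p q = 1 ∨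
      restrict (redStates δ a0) E p q = ⊥) ∧
    (∀ p : ↥(redStates δ a0), restrict (redStates δ a0) E p p = 1) ∧
    (∀ p q : ↥(redStates δ a0),
      restrict (redStates δ a0) E p q = restrict (redStates δ a0) E q p) ∧
    (∀ p q r : ↥(redStates δ a0),
      restrict (redStates δ a0) E p q * restrict (redStates δ a0) E q r ≤
        restrict (redStates δ a0) E p r) ∧
    -- `E^r ∘ δ_x^{A^r_α} ≤ δ_x^{A^r_α} ∘ E^r`
    (∀ (x : X) (p q : ↥(redStates δ a0)),
      fcomp (restrict (redStates δ a0) E) (fun r s => redDelta φY δ a0 r x s) p q ≤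
        fcomp (fun r s => redDelta φY δ a0 r x s) (restrict (redStates δ a0) E) p q) ∧
    -- `Φ : A^r_α/E^r → (A/E)^r_α` is a well-defined bijection compatible with transitions
    (∃ Φ : Quotient (toSetoid (restrict (redStates δ a0) E)
          (fun p => hrefl p.1) (fun p q => hsymm p.1 q.1)
          (fun p q r => htrans p.1 q.1 r.1)) →
        ↥(redStates (deltaQ E hrefl hsymm htrans δ)
            (Quotient.mk (toSetoid E hrefl hsymm htrans) a0)),
      Function.Bijective Φ ∧
      (∀ p : ↥(redStates δ a0),
        (Φ (Quotient.mk _ p) : Quotient (toSetoid E hrefl hsymm htrans)) =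
          Quotient.mk (toSetoid E hrefl hsymm htrans) p.1) ∧
      (∀ (x : X) (p q : ↥(redStates δ a0)),
        fcomp (fcomp (restrict (redStates δ a0) E) (fun r s => redDelta φY δ a0 r x s))
            (restrict (redStates δ a0) E) p q =
          redDelta φY (deltaQ E hrefl hsymm htrans δ)
            (Quotient.mk (toSetoid E hrefl hsymm htrans) a0)
            (Φ (Quotient.mk _ p)) x (Φ (Quotient.mk _ q)))) := by
  classical
  have hEM : ∀ (x : X) (a b : A),
      fcomp E (fcomp (RA φY δ) (fun c d => δ c (Sum.inl x) d)) a b ≤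
      fcomp (fcomp (RA φY δ) (fun c d => δ c (Sum.inl x) d)) E a b := by
    intro x a b
    calc fcomp E (fcomp (RA φY δ) (fun c d => δ c (Sum.inl x) d)) a b
        = fcomp (fcomp E (RA φY δ)) (fun c d => δ c (Sum.inl x) d) a b := by
          rw [← fcomp_assoc]
      _ ≤ fcomp (fcomp (RA φY δ) E) (fun c d => δ c (Sum.inl x) d) a b :=
          fcomp_mono (fun a b => fcomp_rpow_le (E_Rstep_le φY δ hδ hcrisp hrefl hrinv)
            (Fintype.card A) a b) (fun _ _ => le_rfl) a b
      _ = fcomp (RA φY δ) (fcomp E (fun c d => δ c (Sum.inl x) d)) a b := by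
          rw [fcomp_assoc]
      _ ≤ fcomp (RA φY δ) (fcomp (fun c d => δ c (Sum.inl x) d) E) a b :=
          fcomp_mono (fun _ _ => le_rfl) (hrinv (Sum.inl x)) a b
      _ = fcomp (fcomp (RA φY δ) (fun c d => δ c (Sum.inl x) d)) E a b := by
          rw [fcomp_assoc]
  have hcol : ∀ (x : X) (p c : A), c ∉ redStates δ a0 →
      fcomp (RA φY δ) (fun c d => δ c (Sum.inl x) d) p c = ⊥ :=
    fun x p c hc => RAdelta_bot φY δ a0 hδ x p hc
  refine ⟨fun p q => hcrisp p.1 q.1, fun p => hrefl p.1, fun p q => hsymm p.1 q.1,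
    fun p q r => htrans p.1 q.1 r.1, ?_, ?_⟩
  · -- part 5: right invariance of the restricted relation
    intro x p q
    calc fcomp (restrict (redStates δ a0) E) (fun r s => redDelta φY δ a0 r x s) p q
        ≤ Finset.univ.sup (fun c : A =>
            E p.1 c * fcomp (RA φY δ) (fun c d => δ c (Sum.inl x) d) c q.1) :=
          sup_subtype_le
            (fun c => E p.1 c * fcomp (RA φY δ) (fun c d => δ c (Sum.inl x) d) c q.1)
      _ = fcomp E (fcomp (RA φY δ) (fun c d => δ c (Sum.inl x) d)) p.1 q.1 := rfl
      _ ≤ fcomp (fcomp (RA φY δ) (fun c d => δ c (Sum.inl x) d)) E p.1 q.1 := hEM x p.1 q.1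
      _ = Finset.univ.sup (fun c : ↥(redStates δ a0) =>
            fcomp (RA φY δ) (fun c d => δ c (Sum.inl x) d) p.1 c.1 * E c.1 q.1) :=
          (sup_subtype_eq
            (fun c => fcomp (RA φY δ) (fun c d => δ c (Sum.inl x) d) p.1 c * E c q.1)
            (fun c hc => by
              show fcomp (RA φY δ) (fun c d => δ c (Sum.inl x) d) p.1 c * E c q.1 = ⊥
              rw [hcol x p.1 c hc, LMonoid.bot_mul])).symm
      _ = fcomp (fun r s => redDelta φY δ a0 r x s) (restrict (redStates δ a0) E) p q := rfl
  · -- part 6: the bijection Φ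
    have hmem : ∀ p : ↥(redStates δ a0),
        (Quotient.mk (toSetoid E hrefl hsymm htrans) p.1) ∈
          redStates (deltaQ E hrefl hsymm htrans δ)
            (Quotient.mk (toSetoid E hrefl hsymm htrans) a0) := by
      intro p
      rcases p.2 with h | ⟨b, x, h⟩
      · exact Or.inl (by rw [h])
      · refine Or.inr ⟨Quotient.mk (toSetoid E hrefl hsymm htrans) b, x, ?_⟩
        rw [deltaQ_eq hrefl hsymm htrans δ hrinv (Sum.inl x) b p.1]
        apply eq_one_of_one_le
        calc (1 : L) = δ b (Sum.inl x) p.1 * E p.1 p.1 := by rw [h, hrefl, one_mul]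
          _ ≤ _ := Finset.le_sup (f := fun d => δ b (Sum.inl x) d * E d p.1)
              (Finset.mem_univ p.1)
    refine ⟨Quotient.lift
        (fun p : ↥(redStates δ a0) =>
          (⟨Quotient.mk (toSetoid E hrefl hsymm htrans) p.1, hmem p⟩ :
            ↥(redStates (deltaQ E hrefl hsymm htrans δ)
              (Quotient.mk (toSetoid E hrefl hsymm htrans) a0))))
        (fun p q h => Subtype.ext (Quotient.sound h)), ⟨?_, ?_⟩, fun p => rfl, ?_⟩
    · -- injective
      refine fun P Q => Quotient.inductionOn₂ P Q fun p q h => ?_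
      apply Quotient.sound
      exact (Quotient.exact (congrArg Subtype.val h) : E p.1 q.1 = 1)
    · -- surjective
      intro P
      by_cases htriv : (1 : L) = ⊥
      · refine ⟨Quotient.mk _ (⟨a0, Or.inl rfl⟩ : ↥(redStates δ a0)), Subtype.ext ?_⟩
        obtain ⟨c, hc⟩ := Quotient.exists_rep P.1
        show Quotient.mk (toSetoid E hrefl hsymm htrans) a0 = P.1
        rw [← hc]
        exact Quotient.sound (all_eq_of_one_eq_bot htriv (E a0 c) 1)
      · rcases P.2 with h | ⟨Q', x, h⟩
        · exact ⟨Quotient.mk _ (⟨a0, Or.inl rfl⟩ : ↥(redStates δ a0)),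
            Subtype.ext h.symm⟩
        · obtain ⟨b, hb⟩ := Quotient.exists_rep Q'
          obtain ⟨c, hc⟩ := Quotient.exists_rep P.1
          rw [← hb, ← hc, deltaQ_eq hrefl hsymm htrans δ hrinv (Sum.inl x) b c] at h
          obtain ⟨d, _, hd⟩ := crisp_sup_eq_one
            (fun d _ => crisp_mul (hδ b (Sum.inl x) d) (hcrisp d c)) h htriv
          obtain ⟨hd1, hd2⟩ := crisp_mul_eq_one (hδ b (Sum.inl x) d) (hcrisp d c) hd htriv
          refine ⟨Quotient.mk _ (⟨d, Or.inr ⟨b, x, hd1⟩⟩ : ↥(redStates δ a0)),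
            Subtype.ext ?_⟩
          show Quotient.mk (toSetoid E hrefl hsymm htrans) d = P.1
          rw [← hc]
          exact Quotient.sound hd2
    · -- compatibility with the transitions
      intro x p q
      have hRHS : redDelta φY (deltaQ E hrefl hsymm htrans δ)
          (Quotient.mk (toSetoid E hrefl hsymm htrans) a0)
          (⟨Quotient.mk (toSetoid E hrefl hsymm htrans) p.1, hmem p⟩ :
            ↥(redStates (deltaQ E hrefl hsymm htrans δ)
              (Quotient.mk (toSetoid E hrefl hsymm htrans) a0)))
          x
          (⟨Quotient.mk (toSetoid E hrefl hsymm htrans) q.1, hmem q⟩ :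
            ↥(redStates (deltaQ E hrefl hsymm htrans δ)
              (Quotient.mk (toSetoid E hrefl hsymm htrans) a0))) =
          fcomp (fcomp (RA φY δ) (fun c d => δ c (Sum.inl x) d)) E p.1 q.1 := by
        calc redDelta φY (deltaQ E hrefl hsymm htrans δ)
              (Quotient.mk (toSetoid E hrefl hsymm htrans) a0)
              (⟨Quotient.mk (toSetoid E hrefl hsymm htrans) p.1, hmem p⟩) x
              (⟨Quotient.mk (toSetoid E hrefl hsymm htrans) q.1, hmem q⟩)
            = Finset.univ.sup (fun C : Quotient (toSetoid E hrefl hsymm htrans) =>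
                RA φY (deltaQ E hrefl hsymm htrans δ)
                  (Quotient.mk (toSetoid E hrefl hsymm htrans) p.1) C *
                deltaQ E hrefl hsymm htrans δ C (Sum.inl x)
                  (Quotient.mk (toSetoid E hrefl hsymm htrans) q.1)) := rfl
          _ = Finset.univ.sup (fun c : A =>
                RA φY (deltaQ E hrefl hsymm htrans δ)
                  (Quotient.mk (toSetoid E hrefl hsymm htrans) p.1)
                  (Quotient.mk (toSetoid E hrefl hsymm htrans) c) *
                deltaQ E hrefl hsymm htrans δ
                  (Quotient.mk (toSetoid E hrefl hsymm htrans) c) (Sum.inl x)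
                  (Quotient.mk (toSetoid E hrefl hsymm htrans) q.1)) := sup_quotient _
          _ = Finset.univ.sup (fun c : A => fcomp (RA φY δ) E p.1 c *
                fcomp (fun r s => δ r (Sum.inl x) s) E c q.1) := by
              refine Finset.sup_congr rfl fun c _ => ?_
              rw [RAQ_eq hcrisp hrefl hsymm htrans φY δ hδ hrinv p.1 c,
                deltaQ_eq hrefl hsymm htrans δ hrinv (Sum.inl x) c q.1]
          _ = fcomp (fcomp (RA φY δ) E)
                (fcomp (fun r s => δ r (Sum.inl x) s) E) p.1 q.1 := rfl
          _ = fcomp (fcomp (RA φY δ) (fun r s => δ r (Sum.inl x) s)) E p.1 q.1 :=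
              sandwich_step2 hrefl htrans (hrinv (Sum.inl x)) p.1 q.1
      have hLHS : fcomp (fcomp (restrict (redStates δ a0) E)
            (fun r s => redDelta φY δ a0 r x s)) (restrict (redStates δ a0) E) p q =
          fcomp (fcomp (RA φY δ) (fun c d => δ c (Sum.inl x) d)) E p.1 q.1 := by
        apply le_antisymm
        · calc fcomp (fcomp (restrict (redStates δ a0) E)
                (fun r s => redDelta φY δ a0 r x s)) (restrict (redStates δ a0) E) p q
              ≤ Finset.univ.sup (fun c : A =>
                  fcomp E (fcomp (RA φY δ) (fun c d => δ c (Sum.inl x) d)) p.1 c *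
                  E c q.1) := by
                refine Finset.sup_le fun c _ => ?_
                refine le_trans (mul_le_mul_right''
                  (sup_subtype_le (fun d => E p.1 d *
                    fcomp (RA φY δ) (fun c d => δ c (Sum.inl x) d) d c.1)) _) ?_
                exact Finset.le_sup (f := fun c : A =>
                  fcomp E (fcomp (RA φY δ) (fun c d => δ c (Sum.inl x) d)) p.1 c *
                  E c q.1) (Finset.mem_univ c.1)
            _ = fcomp (fcomp E (fcomp (RA φY δ) (fun c d => δ c (Sum.inl x) d)))
                  E p.1 q.1 := rfl
            _ ≤ fcomp (fcomp (fcomp (RA φY δ) (fun c d => δ c (Sum.inl x) d)) E)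
                  E p.1 q.1 := fcomp_mono (hEM x) (fun _ _ => le_rfl) p.1 q.1
            _ = fcomp (fcomp (RA φY δ) (fun c d => δ c (Sum.inl x) d))
                  (fcomp E E) p.1 q.1 := by rw [fcomp_assoc]
            _ = fcomp (fcomp (RA φY δ) (fun c d => δ c (Sum.inl x) d)) E p.1 q.1 := by
                rw [fcomp_EE hrefl htrans]
        · calc fcomp (fcomp (RA φY δ) (fun c d => δ c (Sum.inl x) d)) E p.1 q.1
              = Finset.univ.sup (fun c : ↥(redStates δ a0) =>
                  fcomp (RA φY δ) (fun c d => δ c (Sum.inl x) d) p.1 c.1 * E c.1 q.1) :=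
                (sup_subtype_eq
                  (fun c => fcomp (RA φY δ) (fun c d => δ c (Sum.inl x) d) p.1 c *
                    E c q.1)
                  (fun c hc => by
              show fcomp (RA φY δ) (fun c d => δ c (Sum.inl x) d) p.1 c * E c q.1 = ⊥
              rw [hcol x p.1 c hc, LMonoid.bot_mul])).symm
            _ ≤ fcomp (fcomp (restrict (redStates δ a0) E)
                  (fun r s => redDelta φY δ a0 r x s)) (restrict (redStates δ a0) E)
                  p q := by
                refine Finset.sup_le fun c _ => ?_
                have h1 : fcomp (RA φY δ) (fun c d => δ c (Sum.inl x) d) p.1 c.1 ≤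
                    Finset.univ.sup (fun d : ↥(redStates δ a0) =>
                      E p.1 d.1 * fcomp (RA φY δ) (fun c d => δ c (Sum.inl x) d)
                        d.1 c.1) := by
                  calc fcomp (RA φY δ) (fun c d => δ c (Sum.inl x) d) p.1 c.1
                      = E p.1 p.1 * fcomp (RA φY δ) (fun c d => δ c (Sum.inl x) d)
                          p.1 c.1 := by rw [hrefl, one_mul]
                    _ ≤ _ := Finset.le_sup (f := fun d : ↥(redStates δ a0) =>
                        E p.1 d.1 * fcomp (RA φY δ) (fun c d => δ c (Sum.inl x) d)
                          d.1 c.1) (Finset.mem_univ p)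
                refine le_trans (mul_le_mul_right'' h1 _) ?_
                exact Finset.le_sup (f := fun c : ↥(redStates δ a0) =>
                  (Finset.univ.sup (fun d : ↥(redStates δ a0) =>
                    E p.1 d.1 * fcomp (RA φY δ) (fun c d => δ c (Sum.inl x) d)
                      d.1 c.1)) * E c.1 q.1) (Finset.mem_univ c)
      exact hLHS.trans hRHS.symm
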